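/- arXiv:2112.14456 — 2 statements merged into one kernel-verified Lean document; each statement's English description precedes it below -/
import Mathlib

section
/- One-step linear contraction of the capped sketched Bregman projection method: let f : ℝ^n → ℝ be μ-strongly convex, x ∈ ℝ^n, x_* ∈ ∂f(x), A x̄ = b, θ ∈ [0,1], and r ∈ Δ_q^† a reference probability vector. Define W := {i : g_i(x) ≥ θ·max_j g_j(x) + (1−θ)·Σ_j r_j g_j(x)}. Assume (i) spectral bounds: σ_∞ > 0 with max_i vᵀ Z_i v ≥ σ_∞‖v‖² and σ_r > 0 with Σ_i r_i·vᵀ Z_i v ≥ σ_r‖v‖², both for all v ∉ Null(A); (ii) an error bound: γ > 0 with γ·D_f^{x_*}(x, x̄) ≤ ‖Ax − b‖²; (iii) p is a probability vector supported in W, and for each i ∈ W there is a point x̂_i with S_iᵀ A x̂_i = S_iᵀ b and x̂_{i,*} ∈ ∂f(x̂_i) satisfying D_f^{x̂_{i,*}}(x̂_i, y) ≤ D_f^{x_*}(x, y) − D_f^{x_*}(x, x̂_i) for all y with S_iᵀ A y = S_iᵀ b. Then Σ_{i∈W} p_i·D_f^{x̂_{i,*}}(x̂_i, x̄) ≤ (1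 − μγ(θσ_∞ + (1−θ)σ_r)/(2‖A‖²))·D_f^{x_*}(x, x̄), where ‖A‖ is the spectral norm of A (assume A ≠ 0). -/
open Matrix

/-- The spectral norm (ℓ²→ℓ² operator norm) of a real matrix. -/
noncomputable def specNorm {m n : ℕ} (A : Matrix (Fin m) (Fin n) ℝ) : ℝ :=
  ‖LinearMap.toContinuousLinearMap (Matrix.toEuclideanLin A)‖

/-- Maximum of a real-valued function over a finite nonempty index type. -/
noncomputable def fmax {ι : Type*} [Fintype ι] [Nonempty ι] (v : ι → ℝ) : ℝ :=
  Finset.univ.sup' Finset.univ_nonempty v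

/-- `x_*` is a subgradient of `f` at `x`. -/
def IsSubgrad {n : ℕ} (f : (Fin n → ℝ) → ℝ) (x xs : Fin n → ℝ) : Prop :=
  ∀ u : Fin n → ℝ, f u ≥ f x + xs ⬝ᵥ (u - x)

/-- `f` is μ-strongly convex (w.r.t. the Euclidean norm, ‖v‖² = v ⬝ᵥ v). -/
def StronglyConvexWith {n : ℕ} (μ : ℝ) (f : (Fin n → ℝ) → ℝ) : Prop :=
  ∀ x y xs : Fin n → ℝ, IsSubgrad f x xs →
    f y ≥ f x + xs ⬝ᵥ (y - x) + μ / 2 * ((y - x) ⬝ᵥ (y - x))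

/-- Bregman distance D_f^{x_*}(x, y) := f(y) − f(x) − ⟨x_*, y − x⟩. -/
noncomputable def breg {n : ℕ} (f : (Fin n → ℝ) → ℝ) (xs x y : Fin n → ℝ) : ℝ :=
  f y - f x - xs ⬝ᵥ (y - x)

/- Auxiliary lemmas -/

lemma dself {n : ℕ} (u : Fin n → ℝ) : 0 ≤ u ⬝ᵥ u :=
  Finset.sum_nonneg fun i _ => mul_self_nonneg (u i)

lemma normsq_eq {k : ℕ} (u : Fin k → ℝ) :
    ‖(WithLp.equiv 2 (Fin k → ℝ)).symm u‖^2 = u ⬝ᵥ u := by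
  rw [← real_inner_self_eq_norm_sq]
  simp [inner, dotProduct]

lemma specA {m n : ℕ} (A : Matrix (Fin m) (Fin n) ℝ) (v : Fin n → ℝ) :
    (A.mulVec v) ⬝ᵥ (A.mulVec v) ≤ specNorm A ^ 2 * (v ⬝ᵥ v) := by
  have h := (LinearMap.toContinuousLinearMap (Matrix.toEuclideanLin A)).le_opNorm
      ((WithLp.equiv 2 (Fin n → ℝ)).symm v)
  have h2 : LinearMap.toContinuousLinearMap (Matrix.toEuclideanLin A)
      ((WithLp.equiv 2 (Fin n → ℝ)).symm v)
      = (WithLp.equiv 2 (Fin m → ℝ)).symm (A.mulVec v) := rfl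
  rw [h2] at h
  have h3 : ‖(WithLp.equiv 2 (Fin m → ℝ)).symm (A.mulVec v)‖^2 ≤
      (specNorm A * ‖(WithLp.equiv 2 (Fin n → ℝ)).symm v‖)^2 :=
    pow_le_pow_left₀ (norm_nonneg _) h 2
  rw [normsq_eq] at h3
  calc A.mulVec v ⬝ᵥ A.mulVec v
      ≤ (specNorm A * ‖(WithLp.equiv 2 (Fin n → ℝ)).symm v‖)^2 := h3
    _ = specNorm A ^ 2 * ‖(WithLp.equiv 2 (Fin n → ℝ)).symm v‖^2 := by ring
    _ = specNorm A ^ 2 * (v ⬝ᵥ v) := by rw [normsq_eq]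

lemma specA_pos {m n : ℕ} (A : Matrix (Fin m) (Fin n) ℝ) (hA : A ≠ 0) : 0 < specNorm A := by
  rw [specNorm, norm_pos_iff]
  intro h
  apply hA
  have h2 : Matrix.toEuclideanLin A = 0 := by
    apply LinearMap.ext
    intro w
    show LinearMap.toContinuousLinearMap (Matrix.toEuclideanLin A) w = 0
    rw [h]; rfl
  simpa using congrArg Matrix.toEuclideanLin.symm h2

lemma quad_le {n : ℕ} (Z : Matrix (Fin n) (Fin n) ℝ) (hsym : Zᵀ = Z) (hidem : Z * Z = Z)
    (w : Fin n → ℝ) : w ⬝ᵥ Z.mulVec w ≤ w ⬝ᵥ w := by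
  have key : (w - Z.mulVec w) ⬝ᵥ (w - Z.mulVec w) = w ⬝ᵥ w - w ⬝ᵥ Z.mulVec w := by
    have hZZ : Z.mulVec w ⬝ᵥ Z.mulVec w = w ⬝ᵥ Z.mulVec w := by
      calc Z.mulVec w ⬝ᵥ Z.mulVec w = (Z.mulVec w ᵥ* Z) ⬝ᵥ w := Matrix.dotProduct_mulVec _ _ _
        _ = w ⬝ᵥ (Z.mulVec w ᵥ* Z) := dotProduct_comm _ _
        _ = w ⬝ᵥ Zᵀ.mulVec (Z.mulVec w) := by rw [Matrix.mulVec_transpose]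
        _ = w ⬝ᵥ Z.mulVec w := by rw [hsym, Matrix.mulVec_mulVec, hidem]
    have hcomm : Z.mulVec w ⬝ᵥ w = w ⬝ᵥ Z.mulVec w := dotProduct_comm _ _
    simp only [sub_dotProduct, dotProduct_sub]
    rw [hZZ, hcomm]; ring
  nlinarith [dself (w - Z.mulVec w), key]

lemma Zsym {m n τ : ℕ} (A : Matrix (Fin m) (Fin n) ℝ) (S : Matrix (Fin m) (Fin τ) ℝ)
    (W : Matrix (Fin τ) (Fin τ) ℝ) (hWsym : Wᵀ = W) :
    (Aᵀ * (S * W * Sᵀ) * A)ᵀ = Aᵀ * (S * W * Sᵀ) * A := by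
  simp [Matrix.transpose_mul, Matrix.mul_assoc, hWsym]

lemma Zidem {m n τ : ℕ} (A : Matrix (Fin m) (Fin n) ℝ) (S : Matrix (Fin m) (Fin τ) ℝ)
    (W : Matrix (Fin τ) (Fin τ) ℝ) (hWMW : W * (Sᵀ * A * Aᵀ * S) * W = W) :
    (Aᵀ * (S * W * Sᵀ) * A) * (Aᵀ * (S * W * Sᵀ) * A) = Aᵀ * (S * W * Sᵀ) * A := by
  have h2 := congrArg (· * (Sᵀ * A)) hWMW
  simp only [Matrix.mul_assoc] at h2 ⊢
  rw [h2]

lemma dmv {k l : ℕ} (M : Matrix (Fin k) (Fin l) ℝ) (a : Fin k → ℝ) (u : Fin l → ℝ) :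
    a ⬝ᵥ M *ᵥ u = (Mᵀ *ᵥ a) ⬝ᵥ u := by
  rw [Matrix.dotProduct_mulVec, Matrix.mulVec_transpose]

lemma gloss_eq {m n τ : ℕ} (A : Matrix (Fin m) (Fin n) ℝ) (S : Matrix (Fin m) (Fin τ) ℝ)
    (W : Matrix (Fin τ) (Fin τ) ℝ) (e : Fin m → ℝ) (w : Fin n → ℝ)
    (h : Sᵀ.mulVec e = (Sᵀ * A).mulVec w) :
    e ⬝ᵥ (S * W * Sᵀ).mulVec e = w ⬝ᵥ (Aᵀ * (S * W * Sᵀ) * A).mulVec w := by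
  simp only [Matrix.mul_assoc, ← Matrix.mulVec_mulVec] at h ⊢
  rw [dmv S, dmv Aᵀ, Matrix.transpose_transpose, dmv S, h]

/-- one-step linear contraction of the capped sketched Bregman projection
method: Σ_{i∈W} p_i·D_f^{x̂_{i,*}}(x̂_i, x̄) ≤ (1 − μγ(θσ_∞ + (1−θ)σ_r)/(2‖A‖²))·D_f^{x_*}(x, x̄).
Here the sketched loss at `x` is `gloss i := (Ax − b)ᵀ H_i (Ax − b)` and the capped set is
W := {i : gloss i ≥ θ·max_j gloss j + (1−θ)·Σ_j r_j·gloss j}; since `p` is supported in W,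
the sum over W is written as the full sum Σ_i p_i·D_f^{x̂_{i,*}}(x̂_i, x̄). -/
theorem stmt13 {m n τ q : ℕ} [NeZero q]
    (A : Matrix (Fin m) (Fin n) ℝ) (hA : A ≠ 0)
    (b : Fin m → ℝ) (xbar : Fin n → ℝ) (hxbar : A.mulVec xbar = b)
    (S : Fin q → Matrix (Fin m) (Fin τ) ℝ) (W : Fin q → Matrix (Fin τ) (Fin τ) ℝ)
    (hWsym : ∀ i, (W i)ᵀ = W i)
    (hMWM : ∀ i, ((S i)ᵀ * A * Aᵀ * S i) * W i * ((S i)ᵀ * A * Aᵀ * S i)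
      = (S i)ᵀ * A * Aᵀ * S i)
    (hWMW : ∀ i, W i * ((S i)ᵀ * A * Aᵀ * S i) * W i = W i)
    (hMW : ∀ i, (((S i)ᵀ * A * Aᵀ * S i) * W i)ᵀ = ((S i)ᵀ * A * Aᵀ * S i) * W i)
    (hWM : ∀ i, (W i * ((S i)ᵀ * A * Aᵀ * S i))ᵀ = W i * ((S i)ᵀ * A * Aᵀ * S i))
    (f : (Fin n → ℝ) → ℝ) (μ : ℝ) (hμ : 0 < μ) (hf : StronglyConvexWith μ f)
    (x xs : Fin n → ℝ) (hxs : IsSubgrad f x xs)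
    (θ : ℝ) (hθ : θ ∈ Set.Icc (0 : ℝ) 1)
    (r : Fin q → ℝ) (hr : ∀ i, 0 < r i) (hr1 : ∑ i, r i = 1)
    (gloss : Fin q → ℝ)
    (hgloss : ∀ i, gloss i =
      (A.mulVec x - b) ⬝ᵥ (S i * W i * (S i)ᵀ).mulVec (A.mulVec x - b))
    (σinf : ℝ) (hσinf : 0 < σinf)
    (hspecinf : ∀ v : Fin n → ℝ, A.mulVec v ≠ 0 →
      σinf * (v ⬝ᵥ v) ≤ fmax (fun i => v ⬝ᵥ (Aᵀ * (S i * W i * (S i)ᵀ) * A).mulVec v))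
    (σr : ℝ) (hσr : 0 < σr)
    (hspecr : ∀ v : Fin n → ℝ, A.mulVec v ≠ 0 →
      σr * (v ⬝ᵥ v) ≤ ∑ i, r i * (v ⬝ᵥ (Aᵀ * (S i * W i * (S i)ᵀ) * A).mulVec v))
    (γ : ℝ) (hγ : 0 < γ)
    (herr : γ * breg f xs x xbar ≤ (A.mulVec x - b) ⬝ᵥ (A.mulVec x - b))
    (p : Fin q → ℝ) (hp : ∀ i, 0 ≤ p i) (hp1 : ∑ i, p i = 1)
    (hpsupp : ∀ i, p i ≠ 0 →
      gloss i ≥ θ * fmax gloss + (1 - θ) * ∑ j, r j * gloss j)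
    (xhat xhs : Fin q → (Fin n → ℝ))
    (hxhatL : ∀ i, gloss i ≥ θ * fmax gloss + (1 - θ) * ∑ j, r j * gloss j →
      ((S i)ᵀ * A).mulVec (xhat i) = (S i)ᵀ.mulVec b)
    (hxhs : ∀ i, gloss i ≥ θ * fmax gloss + (1 - θ) * ∑ j, r j * gloss j →
      IsSubgrad f (xhat i) (xhs i))
    (hadm : ∀ i, gloss i ≥ θ * fmax gloss + (1 - θ) * ∑ j, r j * gloss j →
      ∀ y : Fin n → ℝ, ((S i)ᵀ * A).mulVec y = (S i)ᵀ.mulVec b →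
        breg f (xhs i) (xhat i) y ≤ breg f xs x y - breg f xs x (xhat i)) :
    ∑ i, p i * breg f (xhs i) (xhat i) xbar ≤
      (1 - μ * γ * (θ * σinf + (1 - θ) * σr) / (2 * (specNorm A) ^ 2)) *
        breg f xs x xbar := by
  obtain ⟨hθ0, hθ1⟩ := hθ
  set D := breg f xs x xbar with hDdef
  set L := θ * fmax gloss + (1 - θ) * ∑ j, r j * gloss j with hLdef
  clear_value D L
  have hsA : 0 < specNorm A := specA_pos A hA
  have hsA2 : 0 < specNorm A ^ 2 := by positivity
  -- D ≥ μ/2 ‖xbar - x‖² ≥ 0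
  have hDlb : μ / 2 * ((xbar - x) ⬝ᵥ (xbar - x)) ≤ D := by
    have := hf x xbar xs hxs
    simp only [hDdef, breg]
    linarith
  have hDnn : 0 ≤ D :=
    le_trans (mul_nonneg (by linarith) (dself _)) hDlb
  -- per-index bound
  have key : ∀ i, p i * breg f (xhs i) (xhat i) xbar ≤ p i * (D - μ / 2 * L) := by
    intro i
    rcases eq_or_ne (p i) 0 with h0 | h0
    · simp [h0]
    · have hWi := hpsupp i h0
      apply mul_le_mul_of_nonneg_left _ (hp i)
      have hc := hxhatL i hWi
      have hxbarC : ((S i)ᵀ * A).mulVec xbar = (S i)ᵀ.mulVec b := by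
        rw [← Matrix.mulVec_mulVec, hxbar]
      have hub := hadm i hWi xbar hxbarC
      have hsub : (S i)ᵀ.mulVec (A.mulVec x - b) = ((S i)ᵀ * A).mulVec (x - xhat i) := by
        rw [Matrix.mulVec_sub, Matrix.mulVec_sub, hc, ← Matrix.mulVec_mulVec]
      have hg : gloss i
          = (x - xhat i) ⬝ᵥ (Aᵀ * (S i * W i * (S i)ᵀ) * A).mulVec (x - xhat i) := by
        rw [hgloss]; exact gloss_eq A (S i) (W i) _ _ hsub
      have hq : gloss i ≤ (x - xhat i) ⬝ᵥ (x - xhat i) := by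
        rw [hg]
        exact quad_le _ (Zsym A (S i) (W i) (hWsym i)) (Zidem A (S i) (W i) (hWMW i)) _
      have hflip : (x - xhat i) ⬝ᵥ (x - xhat i) = (xhat i - x) ⬝ᵥ (xhat i - x) := by
        simp only [sub_dotProduct, dotProduct_sub]
        rw [dotProduct_comm (xhat i) x]
        ring
      have hsc := hf x (xhat i) xs hxs
      have hlow : μ / 2 * gloss i ≤ breg f xs x (xhat i) := by
        have h1 : μ / 2 * gloss i ≤ μ / 2 * ((xhat i - x) ⬝ᵥ (xhat i - x)) := by
          apply mul_le_mul_of_nonneg_left _ (by linarith)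
          rw [← hflip]; exact hq
        simp only [breg]
        linarith
      have hgL : μ / 2 * L ≤ μ / 2 * gloss i :=
        mul_le_mul_of_nonneg_left hWi (by linarith)
      linarith
  -- bound L from below via γ D / ‖A‖²
  have hcc : 0 ≤ θ * σinf + (1 - θ) * σr := by
    have := mul_nonneg hθ0 hσinf.le
    have := mul_nonneg (by linarith : (0:ℝ) ≤ 1 - θ) hσr.le
    linarith
  have hL : γ * (θ * σinf + (1 - θ) * σr) * D ≤ L * specNorm A ^ 2 := by
    by_cases hAx : A.mulVec x = b
    · have hg0 : ∀ i, gloss i = 0 := by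
        intro i; rw [hgloss, hAx]; simp
      have hfm : fmax gloss = 0 := by
        have : gloss = fun _ => (0:ℝ) := funext hg0
        rw [this, fmax, Finset.sup'_const]
      have hsm : (∑ j, r j * gloss j) = 0 := by
        simp [hg0]
      have hL0 : L = 0 := by rw [hLdef, hfm, hsm]; ring
      have hD0 : D ≤ 0 := by
        have := herr
        rw [hAx] at this
        simp only [sub_self] at this
        simp only [dotProduct_zero] at this
        nlinarith
      have hDeq : D = 0 := le_antisymm hD0 hDnn
      rw [hL0, hDeq]; simp
    · have hAv : A.mulVec (x - xbar) ≠ 0 := by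
        rw [Matrix.mulVec_sub, hxbar, sub_ne_zero]
        exact hAx
      set v := x - xbar with hvdef
      have hvsub : (A.mulVec x - b) = A.mulVec v := by
        rw [hvdef, Matrix.mulVec_sub, hxbar]
      have hgv : ∀ i, gloss i = v ⬝ᵥ (Aᵀ * (S i * W i * (S i)ᵀ) * A).mulVec v := by
        intro i
        rw [hgloss]
        apply gloss_eq
        rw [hvsub, Matrix.mulVec_mulVec]
      have hmax : σinf * (v ⬝ᵥ v) ≤ fmax gloss := by
        have h := hspecinf v hAv
        have : gloss = fun i => v ⬝ᵥ (Aᵀ * (S i * W i * (S i)ᵀ) * A).mulVec v := funext hgv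
        rw [this]
        exact h
      have hsum : σr * (v ⬝ᵥ v) ≤ ∑ j, r j * gloss j := by
        have h := hspecr v hAv
        calc σr * (v ⬝ᵥ v) ≤ ∑ i, r i * (v ⬝ᵥ (Aᵀ * (S i * W i * (S i)ᵀ) * A).mulVec v) := h
          _ = ∑ j, r j * gloss j := by
              apply Finset.sum_congr rfl
              intro j _; rw [hgv j]
      have hAv2 : γ * D ≤ (A.mulVec v) ⬝ᵥ (A.mulVec v) := by
        rw [← hvsub]; exact herr
      have hspec2 : (A.mulVec v) ⬝ᵥ (A.mulVec v) ≤ specNorm A ^ 2 * (v ⬝ᵥ v) := specA A v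
      have hvv : 0 ≤ v ⬝ᵥ v := dself v
      have h2 : (θ * σinf + (1 - θ) * σr) * (v ⬝ᵥ v) ≤ L := by
        have a1 := mul_le_mul_of_nonneg_left hmax hθ0
        have a2 := mul_le_mul_of_nonneg_left hsum (by linarith : (0:ℝ) ≤ 1 - θ)
        rw [hLdef]
        nlinarith
      nlinarith [mul_le_mul_of_nonneg_left hAv2 hcc,
        mul_le_mul_of_nonneg_right h2 hsA2.le,
        mul_le_mul_of_nonneg_left hspec2 hcc]
  calc ∑ i, p i * breg f (xhs i) (xhat i) xbar
      ≤ ∑ i, p i * (D - μ / 2 * L) := Finset.sum_le_sum fun i _ => key i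
    _ = D - μ / 2 * L := by rw [← Finset.sum_mul, hp1, one_mul]
    _ ≤ (1 - μ * γ * (θ * σinf + (1 - θ) * σr) / (2 * (specNorm A) ^ 2)) * D := by
        have hfrac : μ * γ * (θ * σinf + (1 - θ) * σr) / (2 * (specNorm A) ^ 2) * D
            ≤ μ / 2 * L := by
          rw [div_mul_eq_mul_div, div_le_iff₀ (by positivity)]
          nlinarith [mul_le_mul_of_nonneg_left hL hμ.le]
        linarith [hfrac, (by ring : (1 - μ * γ * (θ * σinf + (1 - θ) * σr) /
          (2 * (specNorm A) ^ 2)) * D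
          = D - μ * γ * (θ * σinf + (1 - θ) * σr) / (2 * (specNorm A) ^ 2) * D)]
end

section
/- Exactness characterizes solutions via the expected sketched loss: let p ∈ Δ_q^†, set M := Σ_{i=1}^q p_i Z_i, and assume the exactness condition Null(A) = Null(M). If A x̄ = b, then for every x ∈ ℝ^n, Σ_{i=1}^q p_i g_i(x) = 0 if and only if Ax = b. -/
open Matrix

lemma stmt15_mulVec_dot {k l : ℕ} (B : Matrix (Fin k) (Fin l) ℝ) (w : Fin l → ℝ)
    (u : Fin k → ℝ) : (B *ᵥ w) ⬝ᵥ u = w ⬝ᵥ Bᵀ *ᵥ u := by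
  rw [← Matrix.vecMul_transpose, ← Matrix.dotProduct_mulVec]

lemma stmt15_sum_mulVec {q k l : ℕ} (M : Fin q → Matrix (Fin k) (Fin l) ℝ)
    (v : Fin l → ℝ) : (∑ i, M i) *ᵥ v = ∑ i, (M i) *ᵥ v := by
  ext j
  simp only [Matrix.mulVec, dotProduct, Finset.sum_apply, Matrix.sum_apply,
    Finset.sum_mul]
  exact Finset.sum_comm

lemma stmt15_dot_self_nonneg {k : ℕ} (v : Fin k → ℝ) : 0 ≤ v ⬝ᵥ v :=
  Finset.sum_nonneg fun i _ => mul_self_nonneg _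

/-- exactness characterizes solutions via the expected sketched loss:
if Null(A) = Null(Σ p_i Z_i), then Σ p_i g_i(x) = 0 ↔ Ax = b. -/
theorem stmt15 {m n τ q : ℕ} (A : Matrix (Fin m) (Fin n) ℝ)
    (b : Fin m → ℝ) (xbar : Fin n → ℝ) (hxbar : A.mulVec xbar = b)
    (S : Fin q → Matrix (Fin m) (Fin τ) ℝ) (W : Fin q → Matrix (Fin τ) (Fin τ) ℝ)
    (hWsym : ∀ i, (W i)ᵀ = W i)
    (hMWM : ∀ i, ((S i)ᵀ * A * Aᵀ * S i) * W i * ((S i)ᵀ * A * Aᵀ * S i)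
      = (S i)ᵀ * A * Aᵀ * S i)
    (hWMW : ∀ i, W i * ((S i)ᵀ * A * Aᵀ * S i) * W i = W i)
    (hMW : ∀ i, (((S i)ᵀ * A * Aᵀ * S i) * W i)ᵀ = ((S i)ᵀ * A * Aᵀ * S i) * W i)
    (hWM : ∀ i, (W i * ((S i)ᵀ * A * Aᵀ * S i))ᵀ = W i * ((S i)ᵀ * A * Aᵀ * S i))
    (p : Fin q → ℝ) (hp : ∀ i, 0 < p i) (hp1 : ∑ i, p i = 1)
    (hexact : ∀ v : Fin n → ℝ,
      A.mulVec v = 0 ↔ (∑ i, p i • (Aᵀ * (S i * W i * (S i)ᵀ) * A)).mulVec v = 0) :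
    ∀ x : Fin n → ℝ,
      (∑ i, p i * ((A.mulVec x - b) ⬝ᵥ (S i * W i * (S i)ᵀ).mulVec (A.mulVec x - b)) = 0)
        ↔ A.mulVec x = b := by
  intro x
  set Z : Fin q → Matrix (Fin n) (Fin n) ℝ := fun i => Aᵀ * (S i * W i * (S i)ᵀ) * A with hZ
  have hHsym : ∀ i, (S i * W i * (S i)ᵀ)ᵀ = S i * W i * (S i)ᵀ := by
    intro i
    simp [Matrix.transpose_mul, hWsym i, Matrix.mul_assoc]
  have hZZ : ∀ i, (Z i)ᵀ * Z i = Z i := by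
    intro i
    have hH : (S i * W i * (S i)ᵀ) * (A * Aᵀ) * (S i * W i * (S i)ᵀ)
        = S i * W i * (S i)ᵀ := by
      have := hWMW i
      calc (S i * W i * (S i)ᵀ) * (A * Aᵀ) * (S i * W i * (S i)ᵀ)
          = S i * (W i * ((S i)ᵀ * A * Aᵀ * S i) * W i) * (S i)ᵀ := by
            simp only [Matrix.mul_assoc]
        _ = S i * W i * (S i)ᵀ := by rw [this, Matrix.mul_assoc]
    calc (Z i)ᵀ * Z i = (Aᵀ * (S i * W i * (S i)ᵀ) * A)ᵀ * (Aᵀ * (S i * W i * (S i)ᵀ) * A) := rfl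
      _ = Aᵀ * ((S i * W i * (S i)ᵀ) * (A * Aᵀ) * (S i * W i * (S i)ᵀ)) * A := by
          simp [Matrix.transpose_mul, hWsym i, Matrix.mul_assoc]
      _ = Z i := by rw [hH]
  have hr : A.mulVec x - b = A.mulVec (x - xbar) := by
    rw [Matrix.mulVec_sub, hxbar]
  set v : Fin n → ℝ := x - xbar with hv
  have hterm : ∀ i, (A.mulVec x - b) ⬝ᵥ (S i * W i * (S i)ᵀ).mulVec (A.mulVec x - b)
      = (Z i).mulVec v ⬝ᵥ (Z i).mulVec v := by
    intro i
    rw [hr]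
    have h1 : A.mulVec v ⬝ᵥ (S i * W i * (S i)ᵀ).mulVec (A.mulVec v)
        = v ⬝ᵥ (Z i).mulVec v := by
      rw [dotProduct_comm, stmt15_mulVec_dot, mulVec_mulVec,
        stmt15_mulVec_dot, mulVec_mulVec, hHsym i, hZ]
      simp [Matrix.mul_assoc]
    have h2 : (Z i).mulVec v ⬝ᵥ (Z i).mulVec v = v ⬝ᵥ (Z i).mulVec v := by
      rw [stmt15_mulVec_dot, mulVec_mulVec, hZZ i]
    rw [h1, ← h2]
  constructor
  · intro hsum
    have hnn : ∀ i ∈ Finset.univ, 0 ≤ p i * ((A.mulVec x - b) ⬝ᵥ (S i * W i * (S i)ᵀ).mulVec (A.mulVec x - b)) := by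
      intro i _
      rw [hterm i]
      exact mul_nonneg (hp i).le (stmt15_dot_self_nonneg _)
    have hzero := (Finset.sum_eq_zero_iff_of_nonneg hnn).mp hsum
    have hZv : ∀ i, (Z i).mulVec v = 0 := by
      intro i
      have := hzero i (Finset.mem_univ i)
      rw [hterm i] at this
      have h0 : (Z i).mulVec v ⬝ᵥ (Z i).mulVec v = 0 :=
        (mul_eq_zero.mp this).resolve_left (hp i).ne'
      exact dotProduct_self_eq_zero.mp h0
    have hM : (∑ i, p i • Z i).mulVec v = 0 := by
      rw [stmt15_sum_mulVec]
      refine Finset.sum_eq_zero fun i _ => ?_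
      rw [Matrix.smul_mulVec, hZv i, smul_zero]
    have hAv : A.mulVec v = 0 := (hexact v).mpr hM
    rw [hv, Matrix.mulVec_sub, hxbar, sub_eq_zero] at hAv
    exact hAv
  · intro hAx
    refine Finset.sum_eq_zero fun i _ => ?_
    rw [hAx, sub_self]
    simp
end
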